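/- Let (F_k)_{k=0}^n be a filtration, H a square-integrable random variable, (Δ_k) adapted square-integrable, (φ_k), (ψ_k) predictable with φ_kΔ_k, ψ_kΔ_k square integrable, and θ_0 ∈ ℝ. Set G = H - V_0 - Σ_{k=1}^n φ_k Δ_k. If E[G] = 0 and E[G Δ_k | F_{k-1}] = 0 a.s. for all k, then E[(G - θ_0 - Σ_{k=1}^n ψ_k Δ_k)²] = E[G²] + E[(θ_0 + Σ_{k=1}^n ψ_k Δ_k)²]. -/

import Mathlib

open MeasureTheory Finset

private lemma l2_mul_integrable {Ω : Type*} {m0 : MeasurableSpace Ω} {P : Measure Ω}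
    {f g : Ω → ℝ} (hf : MemLp f 2 P) (hg : MemLp g 2 P) :
    Integrable (fun ω => f ω * g ω) P := by
  have h := (((hf.add hg).integrable_sq.sub hf.integrable_sq).sub hg.integrable_sq).div_const 2
  refine h.congr (Filter.Eventually.of_forall fun ω => ?_)
  simp only [Pi.sub_apply, Pi.add_apply]; ring

/-- Orthogonal decomposition for the quadratic hedging problem: if the hedging
error `G` satisfies `E[G] = 0` and `E[G Δₖ | F_{k-1}] = 0` a.s., then for any
perturbation `(θ₀, ψ)`,
`E[(G - θ₀ - Σ ψₖΔₖ)²] = E[G²] + E[(θ₀ + Σ ψₖΔₖ)²]`. -/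
theorem hedging_orthogonal_decomposition {Ω : Type*} {m0 : MeasurableSpace Ω}
    (P : Measure Ω) [IsProbabilityMeasure P]
    (n : ℕ) (F : ℕ → MeasurableSpace Ω) (hFle : ∀ k, F k ≤ m0)
    (hFmono : Monotone F)
    (Δ : ℕ → Ω → ℝ)
    (hΔmeas : ∀ k, Measurable[F k] (Δ k))
    (hΔ2 : ∀ k, MemLp (Δ k) 2 P)
    (H : Ω → ℝ) (hH : MemLp H 2 P)
    (V0 θ0 : ℝ) (φ ψ : ℕ → Ω → ℝ)
    (hφmeas : ∀ k ∈ Finset.Icc 1 n, Measurable[F (k - 1)] (φ k))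
    (hφ2 : ∀ k ∈ Finset.Icc 1 n, MemLp (fun ω => φ k ω * Δ k ω) 2 P)
    (hψmeas : ∀ k ∈ Finset.Icc 1 n, Measurable[F (k - 1)] (ψ k))
    (hψ2 : ∀ k ∈ Finset.Icc 1 n, MemLp (fun ω => ψ k ω * Δ k ω) 2 P)
    (G : Ω → ℝ)
    (hG : G = fun ω => H ω - V0 - ∑ k ∈ Finset.Icc 1 n, φ k ω * Δ k ω)
    (hGint : ∀ k ∈ Finset.Icc 1 n,
      Integrable (fun ω => G ω * ψ k ω * Δ k ω) P)
    (hGmean : (∫ ω, G ω ∂P) = 0)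
    (hGorth : ∀ k ∈ Finset.Icc 1 n,
      P[fun ω => G ω * Δ k ω | F (k - 1)] =ᵐ[P] 0) :
    (∫ ω, (G ω - θ0 - ∑ k ∈ Finset.Icc 1 n, ψ k ω * Δ k ω) ^ 2 ∂P) =
      (∫ ω, (G ω) ^ 2 ∂P) +
        ∫ ω, (θ0 + ∑ k ∈ Finset.Icc 1 n, ψ k ω * Δ k ω) ^ 2 ∂P := by
  set Y : Ω → ℝ := fun ω => θ0 + ∑ k ∈ Finset.Icc 1 n, ψ k ω * Δ k ω with hY
  -- G ∈ L²
  have hG2 : MemLp G 2 P := by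
    rw [hG]
    exact (hH.sub (memLp_const V0)).sub
      (memLp_finset_sum (Finset.Icc 1 n) hφ2)
  have hY2 : MemLp Y 2 P :=
    (memLp_const θ0).add (memLp_finset_sum (Finset.Icc 1 n) hψ2)
  -- integrability
  have hGsq : Integrable (fun ω => G ω ^ 2) P := hG2.integrable_sq
  have hYsq : Integrable (fun ω => Y ω ^ 2) P := hY2.integrable_sq
  have hGY : Integrable (fun ω => G ω * Y ω) P := l2_mul_integrable hG2 hY2
  -- each cross term vanishes
  have hterm : ∀ k ∈ Finset.Icc 1 n, (∫ ω, G ω * (ψ k ω * Δ k ω) ∂P) = 0 := by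
    intro k hk
    have hgint : Integrable (fun ω => G ω * Δ k ω) P :=
      l2_mul_integrable hG2 (hΔ2 k)
    have hfg : Integrable ((ψ k) * fun ω => G ω * Δ k ω) P := by
      have := hGint k hk
      refine this.congr (Filter.Eventually.of_forall fun ω => ?_)
      simp [Pi.mul_apply]; ring
    have hce := condExp_mul_of_stronglyMeasurable_left (μ := P) (m := F (k - 1))
      ((hψmeas k hk).stronglyMeasurable) hfg hgint
    have hzero : (ψ k) * P[fun ω => G ω * Δ k ω | F (k - 1)] =ᵐ[P] 0 := by
      filter_upwards [hGorth k hk] with ω hω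
      simp [Pi.mul_apply, hω]
    have hce0 : P[(ψ k) * fun ω => G ω * Δ k ω | F (k - 1)] =ᵐ[P] 0 :=
      hce.trans hzero
    have hint : (∫ ω, (ψ k * fun ω => G ω * Δ k ω) ω ∂P) = 0 := by
      rw [← integral_condExp (hFle (k - 1)) (f := (ψ k) * fun ω => G ω * Δ k ω)]
      rw [integral_congr_ae hce0]
      simp
    rw [← hint]
    refine integral_congr_ae (Filter.Eventually.of_forall fun ω => ?_)
    simp [Pi.mul_apply]; ring
  -- E[G Y] = 0
  have hGYzero : (∫ ω, G ω * Y ω ∂P) = 0 := by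
    have hexp : ∀ ω, G ω * Y ω =
        θ0 * G ω + ∑ k ∈ Finset.Icc 1 n, G ω * (ψ k ω * Δ k ω) := by
      intro ω
      simp only [hY, mul_add, Finset.mul_sum]
      ring
    have hint1 : Integrable (fun ω => θ0 * G ω) P := (hG2.integrable one_le_two).const_mul θ0
    have hint2 : Integrable (fun ω => ∑ k ∈ Finset.Icc 1 n, G ω * (ψ k ω * Δ k ω)) P := by
      refine integrable_finset_sum _ fun k hk => ?_
      refine (hGint k hk).congr (Filter.Eventually.of_forall fun ω => ?_)
      ring
    calc (∫ ω, G ω * Y ω ∂P)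
        = ∫ ω, (θ0 * G ω + ∑ k ∈ Finset.Icc 1 n, G ω * (ψ k ω * Δ k ω)) ∂P := by
          exact integral_congr_ae (Filter.Eventually.of_forall fun ω => hexp ω)
      _ = (∫ ω, θ0 * G ω ∂P) + ∫ ω, ∑ k ∈ Finset.Icc 1 n, G ω * (ψ k ω * Δ k ω) ∂P :=
          integral_add hint1 hint2
      _ = 0 := by
          rw [integral_const_mul, hGmean,
            integral_finset_sum _ fun k hk => (hGint k hk).congr
              (Filter.Eventually.of_forall fun ω => by ring)]
          rw [Finset.sum_congr rfl hterm]
          simp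
  -- main expansion
  have hexp2 : ∀ ω, (G ω - θ0 - ∑ k ∈ Finset.Icc 1 n, ψ k ω * Δ k ω) ^ 2 =
      G ω ^ 2 - 2 * (G ω * Y ω) + Y ω ^ 2 := by
    intro ω; simp only [hY]; ring
  calc (∫ ω, (G ω - θ0 - ∑ k ∈ Finset.Icc 1 n, ψ k ω * Δ k ω) ^ 2 ∂P)
      = ∫ ω, (G ω ^ 2 - 2 * (G ω * Y ω) + Y ω ^ 2) ∂P :=
        integral_congr_ae (Filter.Eventually.of_forall fun ω => hexp2 ω)
    _ = (∫ ω, (G ω ^ 2 - 2 * (G ω * Y ω)) ∂P) + ∫ ω, Y ω ^ 2 ∂P :=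
        integral_add (hGsq.sub (hGY.const_mul 2)) hYsq
    _ = (∫ ω, G ω ^ 2 ∂P) - (∫ ω, 2 * (G ω * Y ω) ∂P) + ∫ ω, Y ω ^ 2 ∂P := by
        rw [integral_sub hGsq (hGY.const_mul 2)]
    _ = (∫ ω, G ω ^ 2 ∂P) + ∫ ω, Y ω ^ 2 ∂P := by
        rw [integral_const_mul, hGYzero]; ring
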